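/- arXiv:0711.0041 — 5 statements merged into one kernel-verified Lean document; each statement's English description precedes it below -/
import Mathlib

section
/- Let m > 0 and ω ∈ ℝ with ω² ≥ m². Suppose φ : ℝ → ℂ is continuous on ℝ, square-integrable over ℝ, and for every x ≠ 0 the function φ is twice differentiable at x with second derivative satisfying φ''(x) = (m² − ω²)·φ(x). Then φ is identically zero. (In particular, the Klein–Gordon equation with a point oscillator at the origin has no nonzero solitary waves φ(x)e^{−iωt} with |ω| ≥ m.) -/
open MeasureTheory Set Complex Filter

private lemma const_nonpos_of_integrable {a c : ℝ} {f : ℝ → ℝ}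
    (hf : IntegrableOn f (Ioi a)) (h : ∀ x ∈ Ioi a, c ≤ f x) : c ≤ 0 := by
  by_contra h'
  push_neg at h'
  have hc : IntegrableOn (fun _ : ℝ => c) (Ioi a) := by
    refine hf.mono' aestronglyMeasurable_const ?_
    refine (ae_restrict_iff' measurableSet_Ioi).2 (ae_of_all _ fun x hx => ?_)
    rw [Real.norm_eq_abs, abs_of_pos h']
    exact h x hx
  rw [integrableOn_const_iff] at hc
  rcases hc with hc | hc
  · simp at hc
    exact absurd hc h'.ne'
  · simp [Real.volume_Ioi] at hc

private lemma const_on_Ioi {f : ℝ → ℂ} {a : ℝ}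
    (hd : ∀ x ∈ Ioi a, HasDerivAt f 0 x) :
    ∀ x ∈ Ioi a, f x = f (a + 1) := by
  have hmem : a + 1 ∈ Ioi a := by simp
  intro x hx
  refine (convex_Ioi a).is_const_of_fderivWithin_eq_zero (𝕜 := ℝ)
    (fun y hy => ((hd y hy).differentiableAt).differentiableWithinAt) ?_ hx hmem
  intro y hy
  rw [fderivWithin_of_isOpen isOpen_Ioi hy, (hd y hy).hasFDerivAt.fderiv]
  ext z
  simp

private lemma exp_sol {f : ℝ → ℂ} {r : ℂ} {a : ℝ}
    (hf : ∀ x ∈ Ioi a, HasDerivAt f (r * f x) x) :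
    ∃ C : ℂ, ∀ x ∈ Ioi a, f x = C * Complex.exp (r * x) := by
  have hexp : ∀ x : ℝ, HasDerivAt (fun x : ℝ => Complex.exp (-r * x)) (-r * Complex.exp (-r * x)) x := by
    intro x
    have h1 : HasDerivAt (fun x : ℝ => ((x : ℂ))) 1 x := Complex.ofRealCLM.hasDerivAt
    have h2 : HasDerivAt (fun x : ℝ => -r * (x : ℂ)) (-r) x := by
      simpa using h1.const_mul (-r)
    simpa [mul_comm] using h2.cexp
  have hg : ∀ x ∈ Ioi a, HasDerivAt (fun x : ℝ => f x * Complex.exp (-r * x)) 0 x := by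
    intro x hx
    have := (hf x hx).mul (hexp x)
    refine this.congr_deriv (Eq.symm ?_)
    ring
  have hconst := const_on_Ioi hg
  refine ⟨f (a + 1) * Complex.exp (-r * (a + 1)), fun x hx => ?_⟩
  have h := hconst x hx
  have hne : Complex.exp (-r * x) ≠ 0 := Complex.exp_ne_zero _
  have hne2 : Complex.exp (-r * (a + 1 : ℝ)) ≠ 0 := Complex.exp_ne_zero _
  have : f x = f (a + 1) * Complex.exp (-r * (a + 1 : ℝ)) * Complex.exp (r * x) := by
    have h2 : f x * Complex.exp (-r * x) * Complex.exp (r * x)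
        = f (a + 1) * Complex.exp (-r * (a + 1 : ℝ)) * Complex.exp (r * x) := by rw [h]
    rwa [mul_assoc, ← Complex.exp_add, neg_mul, neg_add_cancel, Complex.exp_zero, mul_one] at h2
  rw [this]
  push_cast
  ring_nf

private lemma ray_zero {c : ℝ} (hc : c ≤ 0) {φ : ℝ → ℂ}
    (hInt : IntegrableOn (fun x => ‖φ x‖ ^ 2) (Ioi 0))
    (hODE : ∀ x ∈ Ioi (0:ℝ), DifferentiableAt ℝ φ x ∧ DifferentiableAt ℝ (deriv φ) x ∧
      deriv (deriv φ) x = (c : ℂ) * φ x) :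
    ∀ x ∈ Ioi (0:ℝ), φ x = 0 := by
  rcases eq_or_lt_of_le hc with hc0 | hc0
  · -- degenerate case c = 0
    have hd2 : ∀ x ∈ Ioi (0:ℝ), HasDerivAt (deriv φ) 0 x := by
      intro x hx
      have h := (hODE x hx).2.1.hasDerivAt
      rwa [(hODE x hx).2.2, hc0, Complex.ofReal_zero, zero_mul] at h
    set b := deriv φ 1 with hb
    have hderiv : ∀ x ∈ Ioi (0:ℝ), deriv φ x = b := by
      intro x hx
      simpa using const_on_Ioi hd2 x hx
    have hlin : ∀ x ∈ Ioi (0:ℝ), φ x = (φ 1 - b) + b * x := by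
      have hg : ∀ x ∈ Ioi (0:ℝ), HasDerivAt (fun y : ℝ => φ y - b * y) 0 x := by
        intro x hx
        have h1 : HasDerivAt (fun y : ℝ => (y : ℂ)) 1 x := Complex.ofRealCLM.hasDerivAt
        have h2 : HasDerivAt (fun y : ℝ => b * (y : ℂ)) b x := by simpa using h1.const_mul b
        have h3 := ((hODE x hx).1.hasDerivAt).sub h2
        rwa [hderiv x hx, sub_self] at h3
      intro x hx
      have h := const_on_Ioi hg x hx
      push_cast at h ⊢
      norm_num at h
      linear_combination h
    rcases eq_or_ne b 0 with hb0 | hb0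
    · -- φ constant A on the ray
      have habs : ∀ x ∈ Ioi (0:ℝ), ‖φ 1 - b‖ ^ 2 ≤ ‖φ x‖ ^ 2 := by
        intro x hx
        rw [hlin x hx, hb0, zero_mul, add_zero]
      have := const_nonpos_of_integrable hInt habs
      have hA : ‖φ 1 - b‖ = 0 := by
        nlinarith [norm_nonneg (φ 1 - b)]
      intro x hx
      rw [hlin x hx, hb0, zero_mul, add_zero]
      have := norm_eq_zero.mp hA
      rwa [hb0] at this
    · -- linear growth contradicts integrability
      exfalso
      set A := φ 1 - b with hA
      set R : ℝ := max 1 ((1 + ‖A‖) / ‖b‖) with hR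
      have hbpos : 0 < ‖b‖ := norm_pos_iff.mpr hb0
      have hR0 : (0:ℝ) < R := lt_of_lt_of_le one_pos (le_max_left _ _)
      have hsub : Ioi R ⊆ Ioi (0:ℝ) := Ioi_subset_Ioi hR0.le
      have h1 : ∀ x ∈ Ioi R, (1:ℝ) ≤ ‖φ x‖ ^ 2 := by
        intro x hx
        have hxR : R < x := hx
        have hx0 : x ∈ Ioi (0:ℝ) := hsub hx
        have hxpos : (0:ℝ) < x := hx0
        rw [hlin x hx0]
        have hbx : ‖b * x‖ = ‖b‖ * x := by
          rw [norm_mul, Complex.norm_real, Real.norm_eq_abs, abs_of_pos hxpos]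
        have htri : ‖b * x‖ ≤ ‖A + b * x‖ + ‖A‖ := by
          calc ‖b * x‖ = ‖(A + b * x) + (-A)‖ := by ring_nf
            _ ≤ ‖A + b * x‖ + ‖-A‖ := norm_add_le _ _
            _ = ‖A + b * x‖ + ‖A‖ := by rw [norm_neg]
        have hxbig : (1 + ‖A‖) / ‖b‖ < x :=
          lt_of_le_of_lt (le_max_right _ _) hxR
        have h2 : 1 + ‖A‖ ≤ ‖b‖ * x := by
          rw [div_lt_iff₀ hbpos] at hxbig
          linarith
        have h3 : (1:ℝ) ≤ ‖A + b * x‖ := by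
          rw [hbx] at htri
          linarith
        nlinarith
      have := const_nonpos_of_integrable (hInt.mono_set hsub) h1
      linarith
  · -- oscillatory case c < 0
    set k := Real.sqrt (-c) with hkdef
    have hkpos : 0 < k := Real.sqrt_pos.2 (by linarith)
    have hk2 : k ^ 2 = -c := Real.sq_sqrt (by linarith)
    set r : ℂ := (k : ℂ) * Complex.I with hr
    have hr2 : r ^ 2 = (c : ℂ) := by
      rw [hr, mul_pow, Complex.I_sq, ← Complex.ofReal_pow, hk2]
      push_cast
      ring
    have hrne : r ≠ 0 := by
      rw [hr]
      exact mul_ne_zero (Complex.ofReal_ne_zero.2 hkpos.ne') Complex.I_ne_zero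
    have hu : ∀ x ∈ Ioi (0:ℝ), HasDerivAt (fun y => deriv φ y + r * φ y)
        (r * (deriv φ x + r * φ x)) x := by
      intro x hx
      have h := ((hODE x hx).2.1.hasDerivAt).add (((hODE x hx).1.hasDerivAt).const_mul r)
      rw [(hODE x hx).2.2] at h
      refine h.congr_deriv (Eq.symm ?_)
      linear_combination (φ x) * hr2
    have hv : ∀ x ∈ Ioi (0:ℝ), HasDerivAt (fun y => deriv φ y - r * φ y)
        ((-r) * (deriv φ x - r * φ x)) x := by
      intro x hx
      have h := ((hODE x hx).2.1.hasDerivAt).sub (((hODE x hx).1.hasDerivAt).const_mul r)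
      rw [(hODE x hx).2.2] at h
      refine h.congr_deriv (Eq.symm ?_)
      linear_combination (φ x) * hr2
    obtain ⟨A, hA⟩ := exp_sol hu
    obtain ⟨B, hB⟩ := exp_sol hv
    have hφeq : ∀ x ∈ Ioi (0:ℝ),
        φ x = (A * Complex.exp (r * x) - B * Complex.exp (-r * x)) / (2 * r) := by
      intro x hx
      have h1 := hA x hx
      have h2 := hB x hx
      rw [neg_mul] at h2
      field_simp
      linear_combination h1 - h2
    set d : ℝ := Real.pi / (2 * k) with hd
    have hdpos : 0 < d := div_pos Real.pi_pos (by linarith)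
    have hkd : k * d = Real.pi / 2 := by
      rw [hd]
      field_simp
    have hexpI : Complex.exp ((↑(k * d)) * Complex.I) = Complex.I := by
      rw [hkd, Complex.exp_mul_I, ← Complex.ofReal_cos, ← Complex.ofReal_sin,
        Real.cos_pi_div_two, Real.sin_pi_div_two]
      simp
    have hexpnI : Complex.exp (-(↑(k * d)) * Complex.I) = -Complex.I := by
      rw [← Complex.ofReal_neg, hkd, Complex.exp_mul_I, ← Complex.ofReal_cos,
        ← Complex.ofReal_sin, Real.cos_neg, Real.sin_neg,
        Real.cos_pi_div_two, Real.sin_pi_div_two]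
      simp
    have habs_exp : ∀ x : ℝ, Complex.normSq (Complex.exp (r * x)) = 1 := by
      intro x
      have : ‖Complex.exp (r * x)‖ = 1 := by
        rw [Complex.norm_exp]
        have : (r * (x:ℂ)).re = 0 := by
          rw [hr]
          simp
        rw [this, Real.exp_zero]
      rw [← Complex.sq_norm, this, one_pow]
    have habs_expn : ∀ x : ℝ, Complex.normSq (Complex.exp (-r * x)) = 1 := by
      intro x
      have : ‖Complex.exp (-r * x)‖ = 1 := by
        rw [Complex.norm_exp]
        have : (-r * (x:ℂ)).re = 0 := by
          rw [hr]
          simp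
        rw [this, Real.exp_zero]
      rw [← Complex.sq_norm, this, one_pow]
    set c0 : ℝ := (Complex.normSq A + Complex.normSq B) / (2 * k ^ 2) with hc0def
    have hkey : ∀ x ∈ Ioi (0:ℝ),
        ‖φ x‖ ^ 2 + ‖φ (x + d)‖ ^ 2 = c0 := by
      intro x hx
      have hxd : x + d ∈ Ioi (0:ℝ) := by
        simp only [mem_Ioi] at hx ⊢
        linarith
      have he1 : Complex.exp (r * ((x + d : ℝ) : ℂ)) = Complex.I * Complex.exp (r * x) := by
        have : r * ((x + d : ℝ) : ℂ) = (↑(k * d)) * Complex.I + r * x := by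
          rw [hr]
          push_cast
          ring
        rw [this, Complex.exp_add, hexpI]
      have he2 : Complex.exp (-r * ((x + d : ℝ) : ℂ)) = -Complex.I * Complex.exp (-r * x) := by
        have : -r * ((x + d : ℝ) : ℂ) = -(↑(k * d)) * Complex.I + -r * x := by
          rw [hr]
          push_cast
          ring
        rw [this, Complex.exp_add, hexpnI]
      rw [hφeq x hx, hφeq (x + d) hxd, he1, he2]
      rw [Complex.sq_norm, Complex.sq_norm, Complex.normSq_div, Complex.normSq_div]
      have hn2r : Complex.normSq (2 * r) = 4 * k ^ 2 := by
        rw [hr, Complex.normSq_mul, Complex.normSq_mul]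
        simp [Complex.normSq_ofReal]
        ring
      rw [hn2r]
      have hrw : A * (Complex.I * Complex.exp (r * x)) - B * (-Complex.I * Complex.exp (-r * x))
          = Complex.I * (A * Complex.exp (r * x) + B * Complex.exp (-r * x)) := by
        ring
      rw [hrw, Complex.normSq_mul Complex.I, Complex.normSq_I, one_mul]
      simp only [Complex.normSq_sub, Complex.normSq_add, Complex.normSq_mul,
        habs_exp x, habs_expn x, mul_one]
      rw [hc0def]
      have hkne : (k:ℝ) ≠ 0 := hkpos.ne'
      field_simp
      ring
    have htrans : IntegrableOn (fun x => ‖φ (x + d)‖ ^ 2) (Ioi 0) := by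
      have hmp := measurePreserving_add_right (volume : Measure ℝ) d
      have hemb : MeasurableEmbedding (fun x : ℝ => x + d) :=
        (Homeomorph.addRight d).measurableEmbedding
      have hpre : (fun x : ℝ => x + d) ⁻¹' (Ioi d) = Ioi 0 := by
        ext y
        simp [mem_Ioi]
      have := (hmp.integrableOn_comp_preimage hemb
        (f := fun x => ‖φ x‖ ^ 2) (s := Ioi d)).2
        (hInt.mono_set (Ioi_subset_Ioi hdpos.le))
      rwa [hpre] at this
    have hG : IntegrableOn
        (fun x => ‖φ x‖ ^ 2 + ‖φ (x + d)‖ ^ 2) (Ioi 0) :=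
      hInt.add htrans
    have hle : ∀ x ∈ Ioi (0:ℝ),
        c0 ≤ ‖φ x‖ ^ 2 + ‖φ (x + d)‖ ^ 2 :=
      fun x hx => (hkey x hx).ge
    have hc0le : c0 ≤ 0 := const_nonpos_of_integrable hG hle
    have hc0ge : 0 ≤ c0 := by
      have h1 := Complex.normSq_nonneg A
      have h2 := Complex.normSq_nonneg B
      rw [hc0def]
      apply div_nonneg (by linarith)
      positivity
    have hAB : Complex.normSq A + Complex.normSq B = 0 := by
      have : c0 = 0 := le_antisymm hc0le hc0ge
      rw [hc0def] at this
      field_simp at this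
      linarith [this]
    have hA0 : A = 0 := by
      have := Complex.normSq_nonneg A
      have := Complex.normSq_nonneg B
      have : Complex.normSq A = 0 := by linarith
      exact Complex.normSq_eq_zero.mp this
    have hB0 : B = 0 := by
      have := Complex.normSq_nonneg A
      have := Complex.normSq_nonneg B
      have : Complex.normSq B = 0 := by linarith
      exact Complex.normSq_eq_zero.mp this
    intro x hx
    rw [hφeq x hx, hA0, hB0]
    simp

/-- Nonexistence of nonzero solitary waves for `|ω| ≥ m`:
if `φ : ℝ → ℂ` is continuous, square-integrable over `ℝ`, and away from the origin
is twice differentiable with `φ'' = (m² − ω²)·φ` where `ω² ≥ m²`, then `φ ≡ 0`. -/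
theorem no_solitary_waves_high_frequency
    (m ω : ℝ) (hm : 0 < m) (hω : m ^ 2 ≤ ω ^ 2)
    (φ : ℝ → ℂ) (hcont : Continuous φ)
    (hL2 : MeasureTheory.Integrable (fun x : ℝ => ‖φ x‖ ^ 2))
    (hODE : ∀ x : ℝ, x ≠ 0 →
      DifferentiableAt ℝ φ x ∧ DifferentiableAt ℝ (deriv φ) x ∧
      deriv (deriv φ) x = ((m ^ 2 - ω ^ 2 : ℝ) : ℂ) * φ x) :
    ∀ x : ℝ, φ x = 0 := by
  set c : ℝ := m ^ 2 - ω ^ 2 with hcdef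
  have hc : c ≤ 0 := by simp [hcdef]; linarith
  -- positive side
  have hpos : ∀ x ∈ Ioi (0:ℝ), φ x = 0 := by
    refine ray_zero hc (hL2.integrableOn) fun x hx => hODE x (ne_of_gt hx)
  -- negative side via reflection
  have hneg : ∀ x ∈ Ioi (0:ℝ), φ (-x) = 0 := by
    set ψ : ℝ → ℂ := fun x => φ (-x) with hψ
    have hIntψ : IntegrableOn (fun x => ‖ψ x‖ ^ 2) (Ioi 0) := by
      exact (hL2.comp_neg).integrableOn
    have hODEψ : ∀ x ∈ Ioi (0:ℝ), DifferentiableAt ℝ ψ x ∧ DifferentiableAt ℝ (deriv ψ) x ∧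
        deriv (deriv ψ) x = (c : ℂ) * ψ x := by
      intro x hx
      have hxne : (-x : ℝ) ≠ 0 := by
        have : (0:ℝ) < x := hx
        simp
        linarith
      obtain ⟨h1, h2, h3⟩ := hODE (-x) hxne
      have hdψ : deriv ψ = fun y => -deriv φ (-y) := by
        funext y
        exact deriv_comp_neg (f := φ) (x := y)
      have hdiffneg : DifferentiableAt ℝ (fun y : ℝ => -y) x := differentiable_neg.differentiableAt
      refine ⟨?_, ?_, ?_⟩
      · exact DifferentiableAt.comp x (by simpa using h1) hdiffneg
      · rw [hdψ]
        exact (DifferentiableAt.comp x (by simpa using h2) hdiffneg).neg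
      · rw [hdψ]
        have : deriv (fun y : ℝ => -deriv φ (-y)) x = -deriv (fun y : ℝ => deriv φ (-y)) x :=
          deriv.neg
        rw [this, deriv_comp_neg, neg_neg, h3]
    exact fun x hx => ray_zero hc hIntψ hODEψ x hx
  -- conclude
  intro x
  rcases lt_trichotomy x 0 with hx | hx | hx
  · have := hneg (-x) (by simpa using hx)
    simpa using this
  · -- x = 0, use continuity
    subst hx
    have hev : φ =ᶠ[nhdsWithin (0:ℝ) (Set.Ioi 0)] fun _ => 0 := by
      filter_upwards [self_mem_nhdsWithin] with y hy
      exact hpos y hy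
    have h1 : Filter.Tendsto φ (nhdsWithin (0:ℝ) (Set.Ioi 0)) (nhds (φ 0)) :=
      (hcont.tendsto 0).mono_left nhdsWithin_le_nhds
    have h2 : Filter.Tendsto φ (nhdsWithin (0:ℝ) (Set.Ioi 0)) (nhds 0) := by
      rw [Filter.tendsto_congr' hev]
      exact tendsto_const_nhds
    exact tendsto_nhds_unique h1 h2
  · exact hpos x hx
end

section
/- Let m > 0 and ω ∈ ℝ with ω² < m², and set κ = √(m² − ω²). Suppose φ : ℝ → ℂ is continuous on ℝ, square-integrable over ℝ, and for every x ≠ 0 the function φ is twice differentiable at x with φ''(x) = κ²·φ(x). Then there exists C ∈ ℂ such that φ(x) = C·e^{−κ·|x|} for all x ∈ ℝ. -/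
open MeasureTheory Set Filter

lemma solitary_half (κ : ℝ) (hκ : 0 < κ) (φ : ℝ → ℂ) (hcont : Continuous φ)
    (hL2 : Integrable (fun x : ℝ => ‖φ x‖ ^ 2))
    (hODE : ∀ x : ℝ, 0 < x →
      DifferentiableAt ℝ φ x ∧ DifferentiableAt ℝ (deriv φ) x ∧
      deriv (deriv φ) x = ((κ ^ 2 : ℝ) : ℂ) * φ x) :
    ∀ x : ℝ, 0 ≤ x → φ x = φ 0 * Complex.exp (-((κ * x : ℝ) : ℂ)) := by
  set k : ℂ := (κ : ℂ) with hk
  have hk0 : k ≠ 0 := by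
    simp [hk, Complex.ofReal_eq_zero]; exact hκ.ne'
  clear_value k
  -- auxiliary exponential derivatives
  have hexp : ∀ (a : ℂ) (x : ℝ), HasDerivAt (fun y : ℝ => Complex.exp (a * y)) (a * Complex.exp (a * x)) x := by
    intro a x
    have h1 : HasDerivAt (fun y : ℝ => (y : ℂ)) 1 x := by
      simpa using (hasDerivAt_id x).ofReal_comp
    have h2 : HasDerivAt (fun y : ℝ => a * (y : ℂ)) a x := by
      simpa using h1.const_mul a
    simpa [mul_comm] using h2.cexp
  set u : ℝ → ℂ := fun x => (deriv φ x + k * φ x) * Complex.exp (-k * x) with hu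
  set v : ℝ → ℂ := fun x => (deriv φ x - k * φ x) * Complex.exp (k * x) with hv
  have hud : ∀ x ∈ Ioi (0:ℝ), HasDerivAt u 0 x := by
    intro x hx
    obtain ⟨h1, h2, h3⟩ := hODE x hx
    have hd1 : HasDerivAt φ (deriv φ x) x := h1.hasDerivAt
    have hd2 : HasDerivAt (deriv φ) (((κ ^ 2 : ℝ) : ℂ) * φ x) x := h3 ▸ h2.hasDerivAt
    have hE := hexp (-k) x
    have := ((hd2.add (hd1.const_mul k)).mul hE)
    convert this using 1
    · rfl
    · rfl
    have : ((κ ^ 2 : ℝ) : ℂ) = k ^ 2 := by push_cast [hk]; ring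
    rw [this, Pi.add_apply]; ring
  have hvd : ∀ x ∈ Ioi (0:ℝ), HasDerivAt v 0 x := by
    intro x hx
    obtain ⟨h1, h2, h3⟩ := hODE x hx
    have hd1 : HasDerivAt φ (deriv φ x) x := h1.hasDerivAt
    have hd2 : HasDerivAt (deriv φ) (((κ ^ 2 : ℝ) : ℂ) * φ x) x := h3 ▸ h2.hasDerivAt
    have hE := hexp k x
    have := ((hd2.sub (hd1.const_mul k)).mul hE)
    convert this using 1
    · rfl
    · rfl
    have : ((κ ^ 2 : ℝ) : ℂ) = k ^ 2 := by push_cast [hk]; ring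
    rw [this, Pi.sub_apply]; ring
  -- constancy on Ioi 0
  have hconst : ∀ (w : ℝ → ℂ), (∀ x ∈ Ioi (0:ℝ), HasDerivAt w 0 x) →
      ∀ x ∈ Ioi (0:ℝ), w x = w 1 := by
    intro w hw x hx
    have hdiff : DifferentiableOn ℝ w (Ioi (0:ℝ)) :=
      fun y hy => ((hw y hy).differentiableAt).differentiableWithinAt
    have hfd : ∀ y ∈ Ioi (0:ℝ), fderivWithin ℝ w (Ioi (0:ℝ)) y = 0 := by
      intro y hy
      rw [fderivWithin_of_isOpen isOpen_Ioi hy, (hw y hy).hasFDerivAt.fderiv]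
      apply ContinuousLinearMap.ext
      intro t
      simp
    exact (convex_Ioi (0:ℝ)).is_const_of_fderivWithin_eq_zero hdiff hfd hx (by norm_num)
  have hu1 := hconst u hud
  have hv1 := hconst v hvd
  set c₁ : ℂ := u 1 with hc₁
  set c₂ : ℂ := v 1 with hc₂
  clear_value c₁ c₂
  -- the representation
  have hrep : ∀ x ∈ Ioi (0:ℝ), 2 * k * φ x = c₁ * Complex.exp (k * x) - c₂ * Complex.exp (-k * x) := by
    intro x hx
    have e1 : (deriv φ x + k * φ x) * Complex.exp (-k * x) = c₁ := hu1 x hx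
    have e2 : (deriv φ x - k * φ x) * Complex.exp (k * x) = c₂ := hv1 x hx
    have hA : Complex.exp (k * x) * Complex.exp (-k * x) = 1 := by
      rw [← Complex.exp_add]; ring_nf; exact Complex.exp_zero
    linear_combination Complex.exp (k * x) * e1 - Complex.exp (-k * x) * e2 - 2 * k * (φ x) * hA
  -- c₁ = 0 by square-integrability
  have hc1z : c₁ = 0 := by
    by_contra hne
    have hc1pos : 0 < ‖c₁‖ := by
      exact norm_pos_iff.mpr hne
    -- eventually |c₁| e^{κx} ≥ |c₂| + 2κ
    have htend : Tendsto (fun x : ℝ => ‖c₁‖ * Real.exp (κ * x)) atTop atTop := by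
      apply Tendsto.const_mul_atTop hc1pos
      exact Real.tendsto_exp_atTop.comp (Tendsto.const_mul_atTop hκ tendsto_id)
    obtain ⟨a, ha⟩ := (htend.eventually_ge_atTop (‖c₂‖ + 2 * κ)).exists_forall_of_atTop
    set b := max a 1 with hb
    have hb0 : (0:ℝ) < b := lt_of_lt_of_le one_pos (le_max_right a 1)
    have hlow : ∀ x : ℝ, b ≤ x → (1:ℝ) ≤ ‖φ x‖ ^ 2 := by
      intro x hxb
      have hx0 : 0 < x := lt_of_lt_of_le hb0 hxb
      have hxa : a ≤ x := le_trans (le_max_left a 1) hxb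
      have h2k : ‖2 * k * φ x‖ = 2 * κ * ‖φ x‖ := by
        rw [norm_mul, norm_mul]
        simp [hk, abs_of_pos hκ]
      have habs : ‖2 * k * φ x‖ ≥ ‖c₁ * Complex.exp (k * x)‖ - ‖c₂ * Complex.exp (-k * x)‖ := by
        rw [hrep x hx0]
        exact
          norm_sub_norm_le (c₁ * Complex.exp (k * x)) (c₂ * Complex.exp (-k * x))
      have he1 : ‖c₁ * Complex.exp (k * x)‖ = ‖c₁‖ * Real.exp (κ * x) := by
        rw [norm_mul, Complex.norm_exp]
        congr 2
        simp [hk]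
      have he2 : ‖c₂ * Complex.exp (-k * x)‖ ≤ ‖c₂‖ := by
        rw [norm_mul, Complex.norm_exp]
        have : ((-k * x : ℂ)).re = -(κ * x) := by simp [hk]
        rw [this]
        have : Real.exp (-(κ * x)) ≤ 1 :=
          Real.exp_le_one_iff.mpr (neg_nonpos.mpr (by positivity))
        nlinarith [norm_nonneg c₂]
      have key : 2 * κ * ‖φ x‖ ≥ 2 * κ := by
        have := ha x hxa
        rw [← h2k]
        calc ‖2 * k * φ x‖
            ≥ ‖c₁ * Complex.exp (k * x)‖ - ‖c₂ * Complex.exp (-k * x)‖ := habs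
          _ ≥ (‖c₂‖ + 2 * κ) - ‖c₂‖ := by
              rw [he1]; linarith
          _ = 2 * κ := by ring
      have h1 : (1:ℝ) ≤ ‖φ x‖ := by nlinarith
      nlinarith
    -- contradiction with integrability
    have hind : Integrable (Set.indicator (Ici b) (fun _ : ℝ => (1:ℝ))) := by
      apply Integrable.mono' hL2
      · exact (stronglyMeasurable_const.indicator measurableSet_Ici).aestronglyMeasurable
      · filter_upwards with x
        by_cases hx : x ∈ Ici b
        · rw [Set.indicator_of_mem hx]
          simpa using hlow x hx
        · rw [Set.indicator_of_notMem hx]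
          simp only [norm_zero]
          positivity
    rw [integrable_indicator_iff measurableSet_Ici] at hind
    rw [integrableOn_const_iff] at hind
    rcases hind with h | h
    · simp at h
    · rw [Real.volume_Ici] at h; exact (lt_irrefl _ h).elim
  -- conclude
  have hφx : ∀ x ∈ Ioi (0:ℝ), φ x = (-c₂ / (2 * k)) * Complex.exp (-k * x) := by
    intro x hx
    have := hrep x hx
    rw [hc1z, zero_mul, zero_sub] at this
    rw [div_mul_eq_mul_div, eq_div_iff (by simp [hk0] : (2:ℂ) * k ≠ 0)]
    linear_combination this
  -- identify φ 0 by continuity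
  set D : ℂ := -c₂ / (2 * k) with hD
  have hg : Continuous (fun x : ℝ => D * Complex.exp (-k * x)) :=
    continuous_const.mul (Complex.continuous_exp.comp (continuous_const.mul Complex.continuous_ofReal))
  have hlim1 : Tendsto φ (nhdsWithin 0 (Ioi (0:ℝ))) (nhds (φ 0)) :=
    (hcont.tendsto 0).mono_left nhdsWithin_le_nhds
  have hlim2 : Tendsto φ (nhdsWithin 0 (Ioi (0:ℝ))) (nhds (D * Complex.exp (-k * (0:ℝ)))) := by
    apply Tendsto.congr' _ ((hg.tendsto 0).mono_left nhdsWithin_le_nhds)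
    filter_upwards [self_mem_nhdsWithin] with x hx
    exact (hφx x hx).symm
  have h0 : φ 0 = D := by
    have := tendsto_nhds_unique hlim1 hlim2
    simpa using this
  intro x hx
  rcases eq_or_lt_of_le hx with h | h
  · simp [← h]
  · rw [hφx x h, h0]
    congr 1
    push_cast [hk]
    ring



/-- Characterization of solitary-wave profiles for `|ω| < m`: a continuous,
square-integrable `φ : ℝ → ℂ` satisfying `φ'' = κ²·φ` away from the origin,
with `κ = √(m² − ω²)`, is of the form `φ(x) = C·e^{−κ|x|}`. -/
theorem solitary_wave_profile
    (m ω : ℝ) (hm : 0 < m) (hω : ω ^ 2 < m ^ 2)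
    (κ : ℝ) (hκ : κ = Real.sqrt (m ^ 2 - ω ^ 2))
    (φ : ℝ → ℂ) (hcont : Continuous φ)
    (hL2 : MeasureTheory.Integrable (fun x : ℝ => ‖φ x‖ ^ 2))
    (hODE : ∀ x : ℝ, x ≠ 0 →
      DifferentiableAt ℝ φ x ∧ DifferentiableAt ℝ (deriv φ) x ∧
      deriv (deriv φ) x = ((κ ^ 2 : ℝ) : ℂ) * φ x) :
    ∃ C : ℂ, ∀ x : ℝ, φ x = C * Complex.exp (-((κ * |x| : ℝ) : ℂ)) := by
  have hκ0 : 0 < κ := by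
    rw [hκ]
    exact Real.sqrt_pos.mpr (by linarith)
  -- right half-line
  have hright := solitary_half κ hκ0 φ hcont hL2 (fun x hx => hODE x hx.ne')
  -- the reflected function
  set ψ : ℝ → ℂ := fun x => φ (-x) with hψ
  have hψcont : Continuous ψ := hcont.comp continuous_neg
  have hψL2 : Integrable (fun x : ℝ => ‖ψ x‖ ^ 2) := by
    have : (fun x : ℝ => ‖ψ x‖ ^ 2) =
        (fun x : ℝ => ‖φ x‖ ^ 2) ∘ Neg.neg := rfl
    rw [this]
    exact ((Measure.measurePreserving_neg (volume : Measure ℝ)).integrable_comp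
      hL2.aestronglyMeasurable).mpr hL2
  have hderψ : deriv ψ = fun x => -deriv φ (-x) := by
    funext x
    exact deriv_comp_neg φ x
  have hψODE : ∀ x : ℝ, 0 < x →
      DifferentiableAt ℝ ψ x ∧ DifferentiableAt ℝ (deriv ψ) x ∧
      deriv (deriv ψ) x = ((κ ^ 2 : ℝ) : ℂ) * ψ x := by
    intro x hx
    have hxne : -x ≠ 0 := by simp [hx.ne']
    obtain ⟨h1, h2, h3⟩ := hODE (-x) hxne
    have hneg : DifferentiableAt ℝ (fun y : ℝ => -y) x := differentiable_neg.differentiableAt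
    refine ⟨h1.comp x hneg, ?_, ?_⟩
    · rw [hderψ]
      exact (h2.comp x hneg).neg
    · rw [hderψ]
      have : deriv (fun y : ℝ => -deriv φ (-y)) x = - deriv (fun y : ℝ => deriv φ (-y)) x := by
        simp [deriv.neg]
      rw [this, deriv_comp_neg, neg_neg, h3]
  have hleft := solitary_half κ hκ0 ψ hψcont hψL2 (fun x hx => hψODE x hx)
  refine ⟨φ 0, fun x => ?_⟩
  rcases le_or_gt 0 x with h | h
  · rw [abs_of_nonneg h]
    exact hright x h
  · rw [abs_of_neg h]
    have h0 : (0:ℝ) ≤ -x := by linarith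
    have := hleft (-x) h0
    simp only [hψ, neg_neg, neg_zero] at this
    exact this
end

section
/- Let m > 0 and ω ∈ ℝ with |ω| > m. Suppose that for each ε > 0, k(ε) ∈ ℂ satisfies k(ε)² = (ω + iε)² − m² and Im k(ε) > 0. Then the limit as ε → 0⁺ of ε·∫_ℝ |e^{i·k(ε)·|x|}|² dx (equivalently, of ε/Im k(ε)) exists and equals √(ω² − m²)/|ω|. -/
open MeasureTheory Filter

/-- Part (i) of the key lemma of the Paley–Wiener argument: for `|ω| > m` and
`k(ε)` the root of `k² = (ω+iε)² − m²` with positive imaginary part,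
`ε·∫_ℝ |e^{i k(ε)|x|}|² dx → √(ω² − m²)/|ω|` as `ε → 0⁺`. -/
theorem limit_of_weighted_L2_norm
    (m ω : ℝ) (hm : 0 < m) (hω : m < |ω|)
    (k : ℝ → ℂ)
    (hk : ∀ ε : ℝ, 0 < ε →
      (k ε) ^ 2 = ((ω : ℂ) + Complex.I * (ε : ℂ)) ^ 2 - (m : ℂ) ^ 2 ∧ 0 < (k ε).im) :
    Tendsto
      (fun ε : ℝ =>
        ε * ∫ x : ℝ, ‖Complex.exp (Complex.I * k ε * ((|x| : ℝ) : ℂ))‖ ^ 2)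
      (nhdsWithin 0 (Set.Ioi 0))
      (nhds (Real.sqrt (ω ^ 2 - m ^ 2) / |ω|)) := by
  have habs : 0 < |ω| := lt_trans hm hω
  have hω0 : ω ≠ 0 := by
    intro h; rw [h, abs_zero] at habs; exact lt_irrefl 0 habs
  have hD : 0 < ω ^ 2 - m ^ 2 := by
    nlinarith [sq_abs ω, abs_nonneg ω]
  -- explicit function
  set g : ℝ → ℝ := fun ε =>
    Real.sqrt (((ω ^ 2 - ε ^ 2 - m ^ 2) +
      Real.sqrt ((ω ^ 2 - ε ^ 2 - m ^ 2) ^ 2 + 4 * ω ^ 2 * ε ^ 2)) / (2 * ω ^ 2)) with hgdef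
  -- g is continuous and g 0 is the claimed limit
  have hgcont : Continuous g := by
    apply Continuous.sqrt
    apply Continuous.div_const
    exact (by continuity : Continuous fun ε : ℝ => (ω ^ 2 - ε ^ 2 - m ^ 2)).add
      (by continuity : Continuous fun ε : ℝ =>
        (ω ^ 2 - ε ^ 2 - m ^ 2) ^ 2 + 4 * ω ^ 2 * ε ^ 2).sqrt
  have hg0 : g 0 = Real.sqrt (ω ^ 2 - m ^ 2) / |ω| := by
    have h1 : ((0 : ℝ) ^ 2 : ℝ) = 0 := by norm_num
    simp only [hgdef, h1]
    rw [show ω ^ 2 - 0 - m ^ 2 = ω ^ 2 - m ^ 2 by ring,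
      show (ω ^ 2 - m ^ 2) ^ 2 + 4 * ω ^ 2 * 0 = (ω ^ 2 - m ^ 2) ^ 2 by ring,
      Real.sqrt_sq hD.le,
      show (ω ^ 2 - m ^ 2 + (ω ^ 2 - m ^ 2)) / (2 * ω ^ 2) = (ω ^ 2 - m ^ 2) / ω ^ 2 by
        field_simp; ring,
      Real.sqrt_div hD.le, Real.sqrt_sq_eq_abs]
  have hgt : Tendsto g (nhdsWithin 0 (Set.Ioi 0)) (nhds (Real.sqrt (ω ^ 2 - m ^ 2) / |ω|)) := by
    rw [← hg0]
    exact (hgcont.continuousAt.tendsto).mono_left nhdsWithin_le_nhds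
  refine hgt.congr' ?_
  filter_upwards [self_mem_nhdsWithin] with ε (hε : 0 < ε)
  obtain ⟨hsq, him⟩ := hk ε hε
  set a := (k ε).re
  set b := (k ε).im
  set c := ω ^ 2 - ε ^ 2 - m ^ 2 with hc
  set S := Real.sqrt (c ^ 2 + 4 * ω ^ 2 * ε ^ 2) with hS
  have hS0 : 0 ≤ S := Real.sqrt_nonneg _
  have hSsq : S ^ 2 = c ^ 2 + 4 * ω ^ 2 * ε ^ 2 :=
    Real.sq_sqrt (by positivity)
  have h1 := congrArg Complex.re hsq
  have h2 := congrArg Complex.im hsq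
  simp only [pow_two, Complex.mul_re, Complex.mul_im, Complex.sub_re, Complex.sub_im,
    Complex.add_re, Complex.add_im, Complex.ofReal_re, Complex.ofReal_im,
    Complex.I_re, Complex.I_im] at h1 h2
  -- h1 : a*a - b*b = c ; h2 : a*b + b*a = 2 ω ε (up to simp normal form)
  have hre : a ^ 2 - b ^ 2 = c := by rw [hc]; linear_combination h1
  have him2 : a * b = ω * ε := by linear_combination h2 / 2
  -- identify S
  have hkey : 2 * b ^ 2 + c = S := by
    have hsq' : (2 * b ^ 2 + c) ^ 2 = S ^ 2 := by
      rw [hSsq]; linear_combination (-(4 * b ^ 2)) * hre + 4 * (a * b + ω * ε) * him2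
    have hnn : 0 ≤ 2 * b ^ 2 + c := by nlinarith [hre, sq_nonneg a]
    calc 2 * b ^ 2 + c = Real.sqrt ((2 * b ^ 2 + c) ^ 2) := (Real.sqrt_sq hnn).symm
      _ = Real.sqrt (S ^ 2) := by rw [hsq']
      _ = S := Real.sqrt_sq hS0
  have hb2 : b ^ 2 = (S - c) / 2 := by linarith
  have hScpos : 0 < (S - c) / 2 := by rw [← hb2]; positivity
  -- the ratio
  have hratio : (ε / b) ^ 2 = (c + S) / (2 * ω ^ 2) := by
    rw [div_pow, hb2, div_eq_div_iff hScpos.ne' (by positivity : (2 * ω ^ 2 : ℝ) ≠ 0)]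
    linear_combination (-1 / 2 : ℝ) * hSsq
  -- compute the integral
  have hbint : (∫ x : ℝ, ‖Complex.exp (Complex.I * k ε * ((|x| : ℝ) : ℂ))‖ ^ 2)
      = 1 / b := by
    have heq : (fun x : ℝ => ‖Complex.exp (Complex.I * k ε * ((|x| : ℝ) : ℂ))‖ ^ 2)
        = fun x : ℝ => Real.exp (-(2 * b * |x|)) := by
      funext x
      rw [Complex.norm_exp]
      have hre' : (Complex.I * k ε * ((|x| : ℝ) : ℂ)).re = -(b * |x|) := by
        simp [Complex.mul_re, Complex.mul_im]; left; rfl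
      rw [hre', sq, ← Real.exp_add]
      ring_nf
    rw [heq]
    have h2b : (0 : ℝ) < 2 * b := by linarith
    rw [show (fun x : ℝ => Real.exp (-(2 * b * |x|)))
        = fun x : ℝ => (fun y : ℝ => Real.exp (-(2 * b * y))) |x| from rfl]
    rw [integral_comp_abs (f := fun y : ℝ => Real.exp (-(2 * b * y)))]
    have := integral_comp_mul_left_Ioi (fun y : ℝ => Real.exp (-y)) 0 h2b
    simp only [mul_zero, smul_eq_mul] at this
    rw [show (fun y : ℝ => Real.exp (-(2 * b * y))) = fun y => Real.exp (-(2 * b * y)) from rfl]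
    have : (∫ y in Set.Ioi (0:ℝ), Real.exp (-(2 * b * y))) = (2 * b)⁻¹ * 1 := by
      rw [← integral_exp_neg_Ioi_zero] at *
      have := integral_comp_mul_left_Ioi (fun y : ℝ => Real.exp (-y)) 0 h2b
      simp only [mul_zero, smul_eq_mul] at this
      exact this
    rw [this]
    field_simp
  rw [hbint]
  have hb0 : (0 : ℝ) < b := him
  have : ε * (1 / b) = ε / b := by ring
  rw [this]
  have hpos : 0 ≤ ε / b := by positivity
  symm
  calc ε / b = Real.sqrt ((ε / b) ^ 2) := (Real.sqrt_sq hpos).symm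
    _ = g ε := by rw [hratio, hgdef]
end

section
/- Let m > 0 and δ > 0. Then there exists ε₀ > 0 such that for all ω ∈ ℝ with |ω| > m + δ, all ε ∈ (0, ε₀), and every k ∈ ℂ with k² = (ω + iε)² − m² and Im k > 0, one has ε·∫_ℝ |e^{i·k·|x|}|² dx ≥ √(ω² − m²)/(2|ω|) (equivalently, ε/Im k ≥ √(ω² − m²)/(2|ω|)). -/
open MeasureTheory

lemma aux_integral_exp_neg_mul_abs {b : ℝ} (hb : 0 < b) :
    ∫ x : ℝ, Real.exp (-(b * |x|)) = 2 / b := by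
  rw [integral_comp_abs (f := fun x => Real.exp (-(b * x)))]
  have h := integral_comp_mul_left_Ioi (fun x => Real.exp (-x)) 0 hb
  simp only [mul_zero, smul_eq_mul] at h
  rw [h, integral_exp_neg_Ioi_zero]
  field_simp

/-- Part (ii) of the key lemma of the Paley–Wiener argument: for every `δ > 0`
there is `ε₀ > 0` such that for all `|ω| > m + δ`, all `ε ∈ (0, ε₀)`, and every
root `k` of `k² = (ω+iε)² − m²` with `Im k > 0`, one has
`ε·∫_ℝ |e^{ik|x|}|² dx ≥ √(ω² − m²)/(2|ω|)`. -/
theorem uniform_lower_bound_weighted_L2_norm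
    (m δ : ℝ) (hm : 0 < m) (hδ : 0 < δ) :
    ∃ ε₀ : ℝ, 0 < ε₀ ∧
      ∀ ω : ℝ, m + δ < |ω| → ∀ ε : ℝ, 0 < ε → ε < ε₀ →
        ∀ k : ℂ, k ^ 2 = ((ω : ℂ) + Complex.I * (ε : ℂ)) ^ 2 - (m : ℂ) ^ 2 → 0 < k.im →
          Real.sqrt (ω ^ 2 - m ^ 2) / (2 * |ω|) ≤
            ε * ∫ x : ℝ, ‖Complex.exp (Complex.I * k * ((|x| : ℝ) : ℂ))‖ ^ 2 := by
  refine ⟨δ / 2, by positivity, fun ω hω ε hε hεδ k hk hkim => ?_⟩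
  -- Compute the integral: |exp(I k |x|)|² = exp(-2 Im k |x|), integral = 1/Im k.
  have hint : (∫ x : ℝ, ‖Complex.exp (Complex.I * k * ((|x| : ℝ) : ℂ))‖ ^ 2)
      = 1 / k.im := by
    have h1 : ∀ x : ℝ, ‖Complex.exp (Complex.I * k * ((|x| : ℝ) : ℂ))‖ ^ 2
        = Real.exp (-(2 * k.im * |x|)) := by
      intro x
      rw [Complex.norm_exp, ← Real.exp_nat_mul]
      congr 1
      simp [Complex.mul_re, Complex.mul_im]
      ring
    simp only [h1]
    rw [aux_integral_exp_neg_mul_abs (by linarith)]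
    field_simp
  rw [hint]
  -- Basic positivity facts
  have hωpos : 0 < |ω| := lt_trans (by linarith) hω
  have hω2 : (m + δ) ^ 2 < ω ^ 2 := by
    have := sq_lt_sq' (by linarith [abs_nonneg ω] : -(|ω|) < m + δ) hω
    calc (m + δ)^2 < |ω|^2 := this
    _ = ω^2 := by rw [sq_abs]
  have hω2m : δ ^ 2 < ω ^ 2 - m ^ 2 := by nlinarith
  -- real and imaginary parts of k² = (ω+iε)² − m²
  have hre := congrArg Complex.re hk
  have him := congrArg Complex.im hk
  simp [pow_two, Complex.mul_re, Complex.mul_im] at hre him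
  -- hre : k.re*k.re - k.im*k.im = ω*ω - ε*ε - m*m ; him : 2 k.re k.im = 2 ω ε  (up to form)
  have hRI : k.re * k.im = ω * ε := by nlinarith [him]
  have hε2 : ε ^ 2 < (ω ^ 2 - m ^ 2) / 4 := by nlinarith
  have hRe2 : (ω ^ 2 - m ^ 2) / 4 ≤ k.re ^ 2 := by nlinarith [sq_nonneg k.im, hre]
  -- |Re k| ≥ √(ω²−m²)/2
  set s := Real.sqrt (ω ^ 2 - m ^ 2) with hs
  have hsnn : 0 ≤ s := Real.sqrt_nonneg _
  have hs2 : s ^ 2 = ω ^ 2 - m ^ 2 := Real.sq_sqrt (by nlinarith)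
  have habsRe : s ≤ 2 * |k.re| := by
    have h4 : s ^ 2 ≤ (2 * |k.re|) ^ 2 := by
      rw [hs2]
      have := sq_abs k.re
      nlinarith
    have h5 := Real.sqrt_le_sqrt h4
    rwa [Real.sqrt_sq hsnn, Real.sqrt_sq (by positivity)] at h5
  -- |ω| ε = |Re k| Im k
  have hkey : |k.re| * k.im = |ω| * ε := by
    rw [← abs_of_pos hkim, ← abs_mul, hRI, abs_mul, abs_of_pos hε]
  -- conclude
  rw [div_le_iff₀ (by positivity), mul_comm]
  have h1 : s * k.im ≤ 2 * |k.re| * k.im := mul_le_mul_of_nonneg_right habsRe hkim.le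
  have h2 : 2 * |k.re| * k.im = 2 * (|ω| * ε) := by rw [mul_assoc, hkey]
  have h3 : s * k.im ≤ 2 * |ω| * ε := by rw [mul_assoc]; linarith [h1, h2.symm.le]
  calc s = s * k.im * (1 / k.im) := by field_simp
  _ ≤ 2 * |ω| * ε * (1 / k.im) := by
      apply mul_le_mul_of_nonneg_right h3; positivity
  _ = 2 * |ω| * (ε * (1 / k.im)) := by ring
end

section
/- Let m > 0 and L > π/(2^{3/2}·m), and set ω = √(π²/L² + m²)/3. Then 0 < ω < m and m < 3ω < 3m. Moreover, setting κ = √(m² − ω²), for every α, β ∈ ℝ satisfying (2κ/(1 + e^{−κL}) − α)·β > 0 there exist A, B ∈ ℝ with A ≠ 0 such that: (i) 2κ = α·(1 + e^{−κL}) + (3/4)·β·A²·(1 + e^{−κL})³; and (ii) B·(π/L) = (1/4)·β·A³·(1 + e^{−κL})³. -/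
/-- Wide gaps: for `L > π/(2^{3/2} m)` and `ω = √(π²/L² + m²)/3` one has
`0 < ω < m` and `m < 3ω < 3m`; moreover, with `κ = √(m²−ω²)`, for all `α, β`
with `(2κ/(1+e^{−κL}) − α)·β > 0` the jump-condition system producing a
two-frequency solitary wave is solvable with `A ≠ 0`. -/
theorem multifrequency_wide_gaps
    (m L : ℝ) (hm : 0 < m) (hL : Real.pi / (2 ^ ((3 : ℝ) / 2) * m) < L)
    (ω : ℝ) (hω : ω = Real.sqrt (Real.pi ^ 2 / L ^ 2 + m ^ 2) / 3)
    (κ : ℝ) (hκ : κ = Real.sqrt (m ^ 2 - ω ^ 2)) :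
    (0 < ω ∧ ω < m) ∧ (m < 3 * ω ∧ 3 * ω < 3 * m) ∧
    ∀ α β : ℝ, (2 * κ / (1 + Real.exp (-(κ * L))) - α) * β > 0 →
      ∃ A B : ℝ, A ≠ 0 ∧
        2 * κ = α * (1 + Real.exp (-(κ * L)))
          + (3 / 4) * β * A ^ 2 * (1 + Real.exp (-(κ * L))) ^ 3 ∧
        B * (Real.pi / L) = (1 / 4) * β * A ^ 3 * (1 + Real.exp (-(κ * L))) ^ 3 := by
  have hpi : (0 : ℝ) < Real.pi := Real.pi_pos
  have h2 : (0 : ℝ) < 2 ^ ((3 : ℝ) / 2) := Real.rpow_pos_of_pos (by norm_num) _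
  have hden : (0 : ℝ) < 2 ^ ((3 : ℝ) / 2) * m := mul_pos h2 hm
  have hL0 : 0 < L := lt_trans (div_pos hpi hden) hL
  have h8 : ((2 : ℝ) ^ ((3 : ℝ) / 2)) ^ 2 = 8 := by
    rw [← Real.rpow_natCast (2 ^ ((3:ℝ)/2)) 2, ← Real.rpow_mul (by norm_num)]
    norm_num
  have hpiL : Real.pi < L * (2 ^ ((3 : ℝ) / 2) * m) := by
    rwa [div_lt_iff₀ hden] at hL
  have hkey : Real.pi ^ 2 / L ^ 2 < 8 * m ^ 2 := by
    rw [div_lt_iff₀ (by positivity)]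
    nlinarith [sq_nonneg L, sq_nonneg (2 ^ ((3:ℝ)/2) * m)]
  set X : ℝ := Real.pi ^ 2 / L ^ 2 + m ^ 2 with hX
  have hX0 : 0 < X := by positivity
  have hXlt : X < (3 * m) ^ 2 := by rw [hX]; nlinarith
  have hXgt : m ^ 2 < X := by
    have h : 0 < Real.pi ^ 2 / L ^ 2 := by positivity
    rw [hX]; linarith
  have hsqrt_lt : Real.sqrt X < 3 * m := by
    rw [show (3:ℝ)*m = Real.sqrt ((3*m)^2) from
      (Real.sqrt_sq (by linarith)).symm]
    exact Real.sqrt_lt_sqrt (le_of_lt hX0) hXlt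
  have hsqrt_gt : m < Real.sqrt X := by
    rw [show m = Real.sqrt (m^2) from (Real.sqrt_sq hm.le).symm]
    exact Real.sqrt_lt_sqrt (by positivity) hXgt
  have hω0 : 0 < ω := by
    rw [hω]; positivity
  have hωm : ω < m := by rw [hω]; linarith
  have h3ω : m < 3 * ω := by rw [hω]; linarith
  refine ⟨⟨hω0, hωm⟩, ⟨h3ω, by linarith⟩, ?_⟩
  have hκ0 : 0 < κ := by
    rw [hκ]; apply Real.sqrt_pos.mpr; nlinarith
  intro α β hab
  set E : ℝ := 1 + Real.exp (-(κ * L)) with hE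
  have hE0 : 0 < E := by positivity
  have hβ : β ≠ 0 := by
    intro h; rw [h, mul_zero] at hab; exact lt_irrefl 0 hab
  have hs0 : 0 < 4 * (2 * κ - α * E) / (3 * β * E ^ 3) * β ^ 2 := by
    have h1 : 2 * κ - α * E = E * (2 * κ / E - α) := by
      field_simp
    rw [h1]
    have : 4 * (E * (2 * κ / E - α)) / (3 * β * E ^ 3) * β ^ 2
        = ((2 * κ / E - α) * β) * (4 * E / (3 * E ^ 3)) := by
      field_simp
    rw [this]
    exact mul_pos hab (by positivity)
  have hs : 0 < 4 * (2 * κ - α * E) / (3 * β * E ^ 3) := by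
    by_contra h
    push_neg at h
    have hβ2 : 0 < β ^ 2 := lt_of_le_of_ne (sq_nonneg β) (Ne.symm (pow_ne_zero 2 hβ))
    nlinarith
  set A : ℝ := Real.sqrt (4 * (2 * κ - α * E) / (3 * β * E ^ 3)) with hA
  have hA0 : 0 < A := Real.sqrt_pos.mpr hs
  have hA2 : A ^ 2 = 4 * (2 * κ - α * E) / (3 * β * E ^ 3) :=
    Real.sq_sqrt hs.le
  clear_value A
  clear hA
  clear_value E
  refine ⟨A, (1 / 4) * β * A ^ 3 * E ^ 3 * L / Real.pi, hA0.ne', ?_, ?_⟩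
  · have : (3 / 4) * β * A ^ 2 * E ^ 3 = 2 * κ - α * E := by
      rw [hA2]; field_simp
    linarith
  · have key : ∀ c : ℝ, c * L / Real.pi * (Real.pi / L) = c := by
      intro c
      rw [mul_div_assoc', div_mul_cancel₀ _ hpi.ne',
        mul_div_cancel_right₀ _ hL0.ne']
    exact key _
end
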